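/- Let I be a closed interval of ℝ and H : ℝ → [0, ∞) be a convex continuous nonnegative function. Let Ω be an open bounded subset of ℝ^d (with Lebesgue measure), let v ∈ L²(Ω) and (v_m)_{m ∈ ℕ} ⊂ L²(Ω) all take values in I almost everywhere, and suppose v_m converges weakly to v in L²(Ω) (i.e. ∫_Ω v_m g dx → ∫_Ω v g dx for every g ∈ L²(Ω)). Then ∫_Ω H(v(x)) dx ≤ liminf_{m→∞} ∫_Ω H(v_m(x)) dx, where the integrals take values in [0, ∞]. -/

import Mathlib

open MeasureTheory Filter Topology

lemma sub_exists (H : ℝ → ℝ) (hH : ConvexOn ℝ Set.univ H) (c : ℝ) :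
    ∃ a : ℝ, ∀ y, H c + a * (y - c) ≤ H y := by
  set S : Set ℝ := (fun u => (H c - H u) / (c - u)) '' Set.Iio c with hS
  have hne : S.Nonempty := ⟨_, ⟨c - 1, by simp, rfl⟩⟩
  have hslope : ∀ u < c, ∀ z, c < z → (H c - H u) / (c - u) ≤ (H z - H c) / (z - c) := by
    intro u hu z hz
    have := hH.slope_mono_adjacent (Set.mem_univ u) (Set.mem_univ z) hu hz
    convert this using 2 <;> ring
  have hbdd : BddAbove S := by
    refine ⟨(H (c+1) - H c) / (c + 1 - c), ?_⟩
    rintro s ⟨u, hu, rfl⟩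
    exact hslope u hu (c+1) (by linarith)
  refine ⟨sSup S, fun y => ?_⟩
  rcases lt_trichotomy y c with h | h | h
  · have hmem : (H c - H y) / (c - y) ∈ S := ⟨y, h, rfl⟩
    have := le_csSup hbdd hmem
    rw [div_le_iff₀ (by linarith : (0:ℝ) < c - y)] at this
    nlinarith
  · simp [h]
  · have hle : sSup S ≤ (H y - H c) / (y - c) :=
      csSup_le hne (by rintro s ⟨u, hu, rfl⟩; exact hslope u hu y h)
    rw [le_div_iff₀ (by linarith : (0:ℝ) < y - c)] at hle
    nlinarith

lemma affine_family (H : ℝ → ℝ) (hconv : ConvexOn ℝ Set.univ H) (hcont : Continuous H) :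
    ∃ A B : ℕ → ℝ, (∀ n y, A n * y + B n ≤ H y) ∧
      (∀ y : ℝ, ∀ ε > 0, ∃ n, H y - ε < A n * y + B n) := by
  choose a ha using fun q : ℚ => sub_exists H hconv q
  obtain ⟨e, he⟩ := exists_surjective_nat ℚ
  refine ⟨fun n => a (e n),
      fun n => H (e n) - a (e n) * (e n),
      fun n y => by dsimp only; nlinarith [ha (e n) y], ?_⟩
  intro y ε hε
  obtain ⟨M, hM⟩ := (isCompact_Icc (a := y - 2) (b := y + 2)).exists_bound_of_continuousOn
    hcont.continuousOn
  have hM0 : 0 ≤ M := le_trans (norm_nonneg _) (hM y (by constructor <;> linarith))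
  obtain ⟨δ, hδ0, hδ⟩ := Metric.continuousAt_iff.1 (hcont.continuousAt (x := y)) (ε/2) (by linarith)
  set η := min δ (min 1 (ε/(4*M+2))) with hη
  have hη0 : 0 < η := by
    refine lt_min hδ0 (lt_min one_pos ?_)
    positivity
  obtain ⟨q, hq⟩ := exists_rat_near y hη0
  obtain ⟨n, rfl⟩ := he q
  refine ⟨n, ?_⟩
  dsimp only
  set q := e n
  have hq1 : |y - (q:ℝ)| < 1 := lt_of_lt_of_le hq (le_trans (min_le_right _ _) (min_le_left _ _))
  have hqδ : |y - (q:ℝ)| < δ := lt_of_lt_of_le hq (min_le_left _ _)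
  have hqε : |y - (q:ℝ)| < ε/(4*M+2) :=
    lt_of_lt_of_le hq (le_trans (min_le_right _ _) (min_le_right _ _))
  have habs := abs_lt.1 hq1
  have hHq : |H q - H y| < ε/2 := by
    have := hδ (x := (q:ℝ)) (by rw [Real.dist_eq, abs_sub_comm]; exact hqδ)
    rwa [Real.dist_eq] at this
  -- bound on a q
  have hb1 : H (q:ℝ) ≤ M := le_trans (le_abs_self _)
    (hM q (by constructor <;> [linarith [habs.1, habs.2]; linarith [habs.1, habs.2]]))
  have hb2 : -M ≤ H ((q:ℝ)+1) := by
    have := hM ((q:ℝ)+1) (by constructor <;> linarith [habs.1, habs.2])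
    have := neg_abs_le (H ((q:ℝ)+1)); linarith [abs_le.1 (hM ((q:ℝ)+1) (by constructor <;> linarith [habs.1, habs.2]))]
  have hb3 : -M ≤ H ((q:ℝ)-1) := by
    linarith [abs_le.1 (hM ((q:ℝ)-1) (by constructor <;> linarith [habs.1, habs.2]))]
  have haup : a q ≤ 2*M := by
    have := ha q ((q:ℝ)+1)
    have h2 : H ((q:ℝ)+1) ≤ M := by
      linarith [abs_le.1 (hM ((q:ℝ)+1) (by constructor <;> linarith [habs.1, habs.2]))]
    have hq' : -M ≤ H (q:ℝ) := by
      linarith [abs_le.1 (hM (q:ℝ) (by constructor <;> linarith [habs.1, habs.2]))]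
    nlinarith [this]
  have halo : -(2*M) ≤ a q := by
    have := ha q ((q:ℝ)-1)
    have hq' : H ((q:ℝ)-1) ≤ M := by
      linarith [abs_le.1 (hM ((q:ℝ)-1) (by constructor <;> linarith [habs.1, habs.2]))]
    have hq'' : -M ≤ H (q:ℝ) := by
      linarith [abs_le.1 (hM (q:ℝ) (by constructor <;> linarith [habs.1, habs.2]))]
    nlinarith [this]
  have hbound : |a q * (y - q)| < ε/2 := by
    have h1 : |a q| ≤ 2*M := abs_le.2 ⟨halo, haup⟩
    calc |a q * (y - q)| = |a q| * |y - (q:ℝ)| := abs_mul _ _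
      _ ≤ (2*M) * |y - (q:ℝ)| := by
          exact mul_le_mul_of_nonneg_right h1 (abs_nonneg _)
      _ < ε/2 := by
          rcases eq_or_lt_of_le hM0 with h | h
          · simp [← h]; positivity
          · have := mul_lt_mul_of_pos_left hqε (by linarith : (0:ℝ) < 2*M)
            have h2 : 2*M * (ε/(4*M+2)) ≤ ε/2 := by
              have ht : ε/(4*M+2) * (4*M+2) = ε := div_mul_cancel₀ _ (by linarith)
              have ht0 : (0:ℝ) ≤ ε/(4*M+2) := by positivity
              nlinarith
            linarith
  have := abs_lt.1 hHq
  have := abs_lt.1 hbound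
  nlinarith

/-- Weak lower semicontinuity of convex integral functionals: if `H : ℝ → [0,∞)` is convex
and continuous, `v` and the `vm` take values a.e. in a closed interval `I`, and `vm → v`
weakly in `L²(Ω)`, then `∫_Ω H(v) ≤ liminf ∫_Ω H(vm)` (integrals taken in `[0,∞]`). -/
theorem stmt7 (d : ℕ) (Ω : Set (EuclideanSpace ℝ (Fin d)))
    (hΩo : IsOpen Ω) (hΩb : Bornology.IsBounded Ω)
    (I : Set ℝ) (hIcl : IsClosed I) (hIoc : I.OrdConnected)
    (H : ℝ → ℝ) (hHconv : ConvexOn ℝ Set.univ H) (hHcont : Continuous H)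
    (hHnn : ∀ x : ℝ, 0 ≤ H x)
    (v : EuclideanSpace ℝ (Fin d) → ℝ) (vm : ℕ → EuclideanSpace ℝ (Fin d) → ℝ)
    (hv : MemLp v 2 (volume.restrict Ω)) (hvm : ∀ m, MemLp (vm m) 2 (volume.restrict Ω))
    (hvI : ∀ᵐ x ∂(volume.restrict Ω), v x ∈ I)
    (hvmI : ∀ m, ∀ᵐ x ∂(volume.restrict Ω), vm m x ∈ I)
    (hweak : ∀ g : EuclideanSpace ℝ (Fin d) → ℝ, MemLp g 2 (volume.restrict Ω) →
      Tendsto (fun m => ∫ x, vm m x * g x ∂(volume.restrict Ω)) atTop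
        (𝓝 (∫ x, v x * g x ∂(volume.restrict Ω)))) :
    ∫⁻ x, ENNReal.ofReal (H (v x)) ∂(volume.restrict Ω) ≤
      Filter.liminf (fun m => ∫⁻ x, ENNReal.ofReal (H (vm m x)) ∂(volume.restrict Ω)) atTop := by
  classical
  set μ := volume.restrict Ω with hμdef
  haveI : IsFiniteMeasure μ := by
    constructor
    rw [hμdef, Measure.restrict_apply_univ]
    exact hΩb.measure_lt_top
  obtain ⟨A, B, hAB, happrox⟩ := affine_family H hHconv hHcont
  set L : ℕ → ℝ → ℝ := fun n y => A n * y + B n with hLdef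
  have hLcont : ∀ n, Continuous (L n) := fun n => by
    exact (continuous_const.mul continuous_id).add continuous_const
  set w := hv.1.mk v with hwdef
  have hw : StronglyMeasurable w := hv.1.stronglyMeasurable_mk
  have hvw : v =ᵐ[μ] w := hv.1.ae_eq_mk
  set G : ℕ → ℝ → ℝ := fun N y => (Finset.range (N+1)).sup' (by simp) (fun k => L k y) with hGdef
  have hGle : ∀ N y, G N y ≤ H y := by
    intro N y
    simp only [hGdef]
    exact Finset.sup'_le _ _ (fun k _ => hAB k y)
  have hGmem : ∀ N k, k ≤ N → ∀ y, L k y ≤ G N y := by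
    intro N k hk y
    simp only [hGdef]
    exact Finset.le_sup' (fun k => L k y) (Finset.mem_range.2 (Nat.lt_succ_of_le hk))
  have hGmono : ∀ y, Monotone (fun N => G N y) := by
    intro y N M hNM
    simp only [hGdef]
    have hsub : Finset.range (N+1) ⊆ Finset.range (M+1) := Finset.range_subset_range.2 (by omega)
    exact Finset.sup'_mono (fun k => L k y) hsub ⟨0, Finset.mem_range.2 (Nat.succ_pos N)⟩
  have hGcont : ∀ N, Continuous (G N) := by
    intro N
    simp only [hGdef]
    have hne : (Finset.range (N+1)).Nonempty := ⟨0, Finset.mem_range.2 (Nat.succ_pos N)⟩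
    have h1 : Continuous ((Finset.range (N+1)).sup' hne L) :=
      Continuous.finset_sup' hne (fun i _ => hLcont i)
    have heq : (fun y => (Finset.range (N+1)).sup' hne (fun k => L k y))
        = (Finset.range (N+1)).sup' hne L := funext fun y => (Finset.sup'_apply hne L y).symm
    convert h1 using 1
  have hGtend : ∀ y, Tendsto (fun N => G N y) atTop (𝓝 (H y)) := by
    intro y
    rw [Metric.tendsto_atTop]
    intro ε hε
    obtain ⟨n0, hn0⟩ := happrox y ε hε
    refine ⟨n0, fun n hn => ?_⟩
    have h1 : L n0 y ≤ G n y := hGmem n n0 hn y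
    have h2 : G n y ≤ H y := hGle n y
    rw [Real.dist_eq, abs_lt]
    simp only [hLdef] at h1
    constructor <;> linarith
  have hptw : ∀ y, ENNReal.ofReal (H y) = ⨆ N, ENNReal.ofReal (G N y) := by
    intro y
    refine (iSup_eq_of_tendsto ?_ ((ENNReal.continuous_ofReal.tendsto _).comp (hGtend y))).symm
    exact fun a b hab => ENNReal.ofReal_le_ofReal (hGmono y hab)
  have hLw : ∫⁻ x, ENNReal.ofReal (H (v x)) ∂μ = ∫⁻ x, ENNReal.ofReal (H (w x)) ∂μ :=
    lintegral_congr_ae (hvw.mono fun x hx => by dsimp only; rw [hx])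
  have hmeasG : ∀ N, Measurable fun x => ENNReal.ofReal (G N (w x)) := fun N =>
    ((hGcont N).measurable.comp hw.measurable).ennreal_ofReal
  have hsup : ∫⁻ x, ENNReal.ofReal (H (w x)) ∂μ
      = ⨆ N, ∫⁻ x, ENNReal.ofReal (G N (w x)) ∂μ := by
    rw [← lintegral_iSup' (fun N => (hmeasG N).aemeasurable)
      (Filter.Eventually.of_forall fun x a b hab => ENNReal.ofReal_le_ofReal (hGmono _ hab))]
    exact lintegral_congr fun x => hptw (w x)
  rw [hLw, hsup]
  refine iSup_le fun N => ?_
  -- the partition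
  set T : ℕ → Set ℝ := fun j =>
    {y | 0 ≤ L j y ∧ G N y = L j y ∧ ∀ i < j, L i y < L j y} with hTdef
  have hTmeas : ∀ j, MeasurableSet (T j) := by
    intro j
    have h1 : MeasurableSet {y : ℝ | 0 ≤ L j y} :=
      measurableSet_le measurable_const (hLcont j).measurable
    have h2 : MeasurableSet {y : ℝ | G N y = L j y} :=
      measurableSet_eq_fun (hGcont N).measurable (hLcont j).measurable
    have h3 : MeasurableSet {y : ℝ | ∀ i < j, L i y < L j y} := by
      have : {y : ℝ | ∀ i < j, L i y < L j y} = ⋂ i ∈ Set.Iio j, {y | L i y < L j y} := by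
        ext y; simp
      rw [this]
      exact MeasurableSet.biInter (Set.to_countable _)
        (fun i _ => measurableSet_lt (hLcont i).measurable (hLcont j).measurable)
    have : T j = {y : ℝ | 0 ≤ L j y} ∩ ({y | G N y = L j y} ∩ {y | ∀ i < j, L i y < L j y}) := by
      ext y; simp [hTdef, and_assoc]
    rw [this]
    exact h1.inter (h2.inter h3)
  set S : ℕ → Set (EuclideanSpace ℝ (Fin d)) := fun j => w ⁻¹' (T j) with hSdef
  have hSmem : ∀ j x, x ∈ S j ↔
      (0 ≤ L j (w x) ∧ G N (w x) = L j (w x) ∧ ∀ i < j, L i (w x) < L j (w x)) := by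
    intro j x
    simp only [hSdef, hTdef, Set.mem_preimage, Set.mem_setOf_eq]
  have hSmeas : ∀ j, MeasurableSet (S j) := by
    intro j
    simp only [hSdef]
    exact hw.measurable (hTmeas j)
  have key : ∀ i j, i < j → ∀ x, x ∈ S i → x ∈ S j → False := by
    intro i j hij x hxi hxj
    obtain ⟨_, hGi, _⟩ := (hSmem i x).1 hxi
    obtain ⟨_, hGj, hlt⟩ := (hSmem j x).1 hxj
    have h1 := hlt i hij
    rw [← hGi, ← hGj] at h1
    exact lt_irrefl _ h1
  have hcover : ∀ x, 0 ≤ G N (w x) → ∃ j ∈ Finset.range (N+1), x ∈ S j := by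
    intro x hx
    have hex : ∃ j, j ≤ N ∧ L j (w x) = G N (w x) := by
      obtain ⟨k, hk, hkeq⟩ := Finset.exists_mem_eq_sup' (s := Finset.range (N+1))
        (by simp) (fun k => L k (w x))
      refine ⟨k, Nat.lt_succ_iff.1 (Finset.mem_range.1 hk), ?_⟩
      rw [hGdef]
      exact hkeq.symm
    obtain ⟨hjN, hjeq⟩ := Nat.find_spec hex
    refine ⟨Nat.find hex, Finset.mem_range.2 (Nat.lt_succ_of_le hjN),
      (hSmem _ x).2 ⟨?_, hjeq.symm, ?_⟩⟩
    · rw [hjeq]; exact hx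
    · intro i hi
      have hle : L i (w x) ≤ G N (w x) := hGmem N i (le_trans (Nat.le_of_lt hi) hjN) _
      have hne : L i (w x) ≠ G N (w x) := by
        intro heq
        exact Nat.find_min hex hi ⟨le_trans (Nat.le_of_lt hi) hjN, heq⟩
      rw [hjeq]
      exact lt_of_le_of_ne hle hne
  have hsum_eq : ∀ x, ENNReal.ofReal (G N (w x)) =
      ∑ j ∈ Finset.range (N+1), (S j).indicator (fun x => ENNReal.ofReal (L j (w x))) x := by
    intro x
    by_cases h0 : 0 ≤ G N (w x)
    · obtain ⟨j, hjmem, hjS⟩ := hcover x h0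
      rw [Finset.sum_eq_single_of_mem j hjmem]
      · rw [Set.indicator_of_mem hjS]
        exact congrArg _ ((hSmem j x).1 hjS).2.1
      · intro i _ hine
        apply Set.indicator_of_notMem
        intro hxi
        rcases lt_or_gt_of_ne hine with h | h
        · exact key i j h x hxi hjS
        · exact key j i h x hjS hxi
    · push_neg at h0
      rw [ENNReal.ofReal_of_nonpos h0.le]
      symm
      apply Finset.sum_eq_zero
      intro i _
      apply Set.indicator_of_notMem
      intro hxi
      obtain ⟨hx1, hx2, _⟩ := (hSmem i x).1 hxi
      rw [← hx2] at hx1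
      linarith
  have hmeasLw : ∀ j, Measurable fun x => ENNReal.ofReal (L j (w x)) := fun j =>
    ((hLcont j).measurable.comp hw.measurable).ennreal_ofReal
  have hsplit : ∫⁻ x, ENNReal.ofReal (G N (w x)) ∂μ
      = ∑ j ∈ Finset.range (N+1), ∫⁻ x in S j, ENNReal.ofReal (L j (w x)) ∂μ := by
    rw [lintegral_congr hsum_eq, lintegral_finset_sum _
      (fun j _ => ((hmeasLw j).indicator (hSmeas j)))]
    exact Finset.sum_congr rfl fun j _ => lintegral_indicator (hSmeas j) _
  -- integrability facts
  have hvint : Integrable v μ := hv.integrable (by norm_num)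
  have hvmint : ∀ m, Integrable (vm m) μ := fun m => (hvm m).integrable (by norm_num)
  have hwint : Integrable w μ := hvint.congr hvw
  have hLint : ∀ (j : ℕ) (u : EuclideanSpace ℝ (Fin d) → ℝ), Integrable u μ →
      Integrable (fun x => L j (u x)) μ := by
    intro j u hu
    simpa [hLdef] using (hu.const_mul (A j)).add (integrable_const (B j))
  -- step A
  have hA : ∀ j, ∫⁻ x in S j, ENNReal.ofReal (L j (w x)) ∂μ
      = ENNReal.ofReal (∫ x in S j, L j (v x) ∂μ) := by
    intro j
    have hnn : 0 ≤ᵐ[μ.restrict (S j)] fun x => L j (w x) := by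
      filter_upwards [ae_restrict_mem (hSmeas j)] with x hx using ((hSmem j x).1 hx).1
    rw [← ofReal_integral_eq_lintegral_ofReal ((hLint j w hwint).restrict) hnn]
    congr 1
    refine setIntegral_congr_ae (hSmeas j) (hvw.mono fun x hx _ => by rw [hx])
  -- weak convergence on the sets
  have hweak_set : ∀ j, Tendsto (fun m => ∫ x in S j, vm m x ∂μ) atTop
      (𝓝 (∫ x in S j, v x ∂μ)) := by
    intro j
    have hg : MemLp ((S j).indicator (fun _ => (1:ℝ))) 2 μ :=
      (memLp_const 1).indicator (hSmeas j)
    have hrw : ∀ u : EuclideanSpace ℝ (Fin d) → ℝ,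
        ∫ x, u x * (S j).indicator (fun _ => (1:ℝ)) x ∂μ = ∫ x in S j, u x ∂μ := by
      intro u
      rw [← integral_indicator (hSmeas j)]
      congr 1
      ext x
      by_cases hx : x ∈ S j <;> simp [hx]
    have := hweak _ hg
    simp only [hrw] at this
    exact this
  have hB : ∀ j, Tendsto (fun m => ∫ x in S j, L j (vm m x) ∂μ) atTop
      (𝓝 (∫ x in S j, L j (v x) ∂μ)) := by
    intro j
    have h1 : ∀ u : EuclideanSpace ℝ (Fin d) → ℝ, Integrable u μ →
        ∫ x in S j, L j (u x) ∂μ = A j * ∫ x in S j, u x ∂μ + (μ (S j)).toReal * B j := by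
      intro u hu
      simp only [hLdef]
      rw [integral_add ((hu.restrict).const_mul _) (integrable_const _),
        integral_const, integral_const_mul]
      simp [Measure.restrict_apply_univ, smul_eq_mul, Measure.real]
    have heq : (fun m => ∫ x in S j, L j (vm m x) ∂μ)
        = fun m => A j * ∫ x in S j, vm m x ∂μ + (μ (S j)).toReal * B j :=
      funext fun m => h1 (vm m) (hvmint m)
    rw [heq, h1 v hvint]
    exact ((hweak_set j).const_mul (A j)).add_const _
  -- step C
  have hC : ∀ (j : ℕ) (m : ℕ), ENNReal.ofReal (∫ x in S j, L j (vm m x) ∂μ)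
      ≤ ∫⁻ x in S j, ENNReal.ofReal (H (vm m x)) ∂μ := by
    intro j m
    have hint : Integrable (fun x => L j (vm m x)) (μ.restrict (S j)) :=
      (hLint j (vm m) (hvmint m)).restrict
    calc ENNReal.ofReal (∫ x in S j, L j (vm m x) ∂μ)
        ≤ ENNReal.ofReal (∫ x in S j, max (L j (vm m x)) 0 ∂μ) :=
          ENNReal.ofReal_le_ofReal
            (integral_mono hint hint.pos_part (fun x => le_max_left _ _))
      _ = ∫⁻ x in S j, ENNReal.ofReal (max (L j (vm m x)) 0) ∂μ :=
          ofReal_integral_eq_lintegral_ofReal hint.pos_part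
            (Filter.Eventually.of_forall fun x => le_max_right _ _)
      _ = ∫⁻ x in S j, ENNReal.ofReal (L j (vm m x)) ∂μ := by
          refine lintegral_congr fun x => ?_
          rcases le_total (L j (vm m x)) 0 with h | h
          · rw [max_eq_right h, ENNReal.ofReal_of_nonpos h, ENNReal.ofReal_zero]
          · rw [max_eq_left h]
      _ ≤ ∫⁻ x in S j, ENNReal.ofReal (H (vm m x)) ∂μ :=
          lintegral_mono fun x => ENNReal.ofReal_le_ofReal (hAB j (vm m x))
  -- step D
  have hD : ∀ m, ∑ j ∈ Finset.range (N+1), ∫⁻ x in S j, ENNReal.ofReal (H (vm m x)) ∂μ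
      ≤ ∫⁻ x, ENNReal.ofReal (H (vm m x)) ∂μ := by
    intro m
    rw [← lintegral_finset_sum_measure]
    refine lintegral_mono' ?_ le_rfl
    refine Measure.le_iff.2 fun t ht => ?_
    rw [Measure.finset_sum_apply]
    have heq : ∀ j ∈ Finset.range (N+1), μ.restrict (S j) t = μ (t ∩ S j) :=
      fun j _ => Measure.restrict_apply ht
    rw [Finset.sum_congr rfl heq]
    rw [← measure_biUnion_finset ?_ (fun j _ => ht.inter (hSmeas j))]
    · refine measure_mono ?_
      intro x hx
      simp only [Set.mem_iUnion] at hx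
      obtain ⟨j, _, hj, _⟩ := hx
      exact hj
    · intro i hi j hj hij
      refine Set.disjoint_left.2 fun x hxi hxj => ?_
      rcases lt_or_gt_of_ne hij with h | h
      · exact key i j h x hxi.2 hxj.2
      · exact key j i h x hxj.2 hxi.2

  -- assembly
  rw [hsplit]
  calc ∑ j ∈ Finset.range (N+1), ∫⁻ x in S j, ENNReal.ofReal (L j (w x)) ∂μ
      = ∑ j ∈ Finset.range (N+1), ENNReal.ofReal (∫ x in S j, L j (v x) ∂μ) :=
        Finset.sum_congr rfl fun j _ => hA j
    _ = Filter.liminf (fun m => ∑ j ∈ Finset.range (N+1),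
          ENNReal.ofReal (∫ x in S j, L j (vm m x) ∂μ)) atTop :=
        (tendsto_finset_sum _ (fun j _ =>
          (ENNReal.continuous_ofReal.tendsto _).comp (hB j))).liminf_eq.symm
    _ ≤ Filter.liminf (fun m => ∫⁻ x, ENNReal.ofReal (H (vm m x)) ∂μ) atTop := by
        refine liminf_le_liminf (Filter.Eventually.of_forall fun m => ?_)
        exact le_trans (Finset.sum_le_sum fun j _ => hC j m) (hD m)
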